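/- Derived propagators compose: let φ be a view from Val to Val' and φ' a view from Val' to Val''; then the pointwise composition ψ_x = φ'_x ∘ φ_x is a view from Val to Val'', and for every propagator p over Val'' and every domain d over Val, φ̂(φ̂'(p))(d) = ψ̂(p)(d). -/
import Mathlib


namespace Stmt13

variable {Var Val Val' Val'' : Type*}

/-- A view applied to a domain (pointwise image). -/
def img {Val Val' : Type*} (φ : Var → Val → Val') (d : Var → Set Val) : Var → Set Val' :=
  fun x => φ x '' d x

/-- The inverse of a view applied to a domain (pointwise preimage). -/
def pre {Val Val' : Type*} (φ : Var → Val → Val') (d : Var → Set Val') : Var → Set Val :=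
  fun x => φ x ⁻¹' d x

/-- The derived propagator `φ̂(p) = φ⁻ ∘ p ∘ φ`. -/
def derived {Val Val' : Type*} (φ : Var → Val → Val')
    (p : (Var → Set Val') → Var → Set Val') (d : Var → Set Val) : Var → Set Val :=
  pre φ (p (img φ d))

/-- Derived propagators compose: if `φ` is a view from `Val` to `Val'` and `φ'` a view from
`Val'` to `Val''`, then the pointwise composition `ψ_x = φ'_x ∘ φ_x` is a view from `Val` to
`Val''` (each `ψ_x` is injective), and for every propagator `p` over `Val''` and every domain
`d` over `Val`, `φ̂(φ̂'(p))(d) = ψ̂(p)(d)`. -/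
theorem derived_compose (φ : Var → Val → Val') (φ' : Var → Val' → Val'')
    (hφ : ∀ x, Function.Injective (φ x))
    (hφ' : ∀ x, Function.Injective (φ' x))
    (p : (Var → Set Val'') → Var → Set Val'')
    (hcontr : ∀ d x, p d x ⊆ d x)
    (hmono : ∀ d' d : Var → Set Val'', (∀ x, d' x ⊆ d x) → ∀ x, p d' x ⊆ p d x) :
    (∀ x, Function.Injective (φ' x ∘ φ x)) ∧
    ∀ d : Var → Set Val,
      derived φ (derived φ' p) d = derived (fun x => φ' x ∘ φ x) p d := by
  refine ⟨fun x => (hφ' x).comp (hφ x), fun d => ?_⟩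
  funext x
  have : img φ' (img φ d) = img (fun x => φ' x ∘ φ x) d := by
    funext y; simp [img, ← Set.image_comp]
  simp [derived, pre, this, Set.preimage_comp]

end Stmt13
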